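/- Let f : ℝ_{>0}^n → ℝ, f(x) = ∑_{μ ∈ σ(f)} c_μ x^μ be a signomial, and assume there exists v ∈ ℝ^n such that σ(f) ⊆ N(f)_v ∪ N(f)_{-v}. Consider the bipartite graph whose vertex set is the disjoint union of the sets of connected components of f|_{N(f)_v}^{-1}(ℝ_{<0}) and of f|_{N(f)_{-v}}^{-1}(ℝ_{<0}), with an edge between a component U of f|_{N(f)_v}^{-1}(ℝ_{<0}) and a component V of f|_{N(f)_{-v}}^{-1}(ℝ_{<0}) whenever U ∩ V ≠ ∅, and let D be the number of connected components of this graph. Then the number of connected components of f^{-1}(ℝ_{<0}) equals D, and D is at most the number of connected components of f|_{N(f)_v}^{-1}(ℝ_{<0}) plus the number of connected components of f|_{N(f)_{-v}}^{-1}(ℝ_{<0}). -/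

import Mathlib

open Finset

/-- The signomial `x ↦ ∑_{μ ∈ S} c μ * x^μ` (with real exponents, via `Real.rpow`). -/
noncomputable def sig {n : ℕ} (S : Finset (Fin n → ℝ)) (c : (Fin n → ℝ) → ℝ)
    (x : Fin n → ℝ) : ℝ :=
  ∑ μ ∈ S, c μ * ∏ i, x i ^ μ i

open Classical in
/-- The restriction `f|_F` of the signomial to a subset `F ⊆ ℝⁿ` of exponent vectors. -/
noncomputable def sigOn {n : ℕ} (S : Finset (Fin n → ℝ)) (c : (Fin n → ℝ) → ℝ)
    (F : Set (Fin n → ℝ)) (x : Fin n → ℝ) : ℝ :=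
  ∑ μ ∈ S, if μ ∈ F then c μ * ∏ i, x i ^ μ i else 0

/-- `f⁻¹(ℝ_{<0})`: the points of the positive orthant where the signomial is negative. -/
def negSet {n : ℕ} (S : Finset (Fin n → ℝ)) (c : (Fin n → ℝ) → ℝ) : Set (Fin n → ℝ) :=
  {x | (∀ i, 0 < x i) ∧ sig S c x < 0}

/-- `(f|_F)⁻¹(ℝ_{<0})`. -/
def negSetOn {n : ℕ} (S : Finset (Fin n → ℝ)) (c : (Fin n → ℝ) → ℝ)
    (F : Set (Fin n → ℝ)) : Set (Fin n → ℝ) :=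
  {x | (∀ i, 0 < x i) ∧ sigOn S c F x < 0}

/-- `σ₊(f)`: the positive exponent vectors. -/
def sigPosExp {n : ℕ} (S : Finset (Fin n → ℝ)) (c : (Fin n → ℝ) → ℝ) : Set (Fin n → ℝ) :=
  {μ | μ ∈ S ∧ 0 < c μ}

/-- `σ₋(f)`: the negative exponent vectors. -/
def sigNegExp {n : ℕ} (S : Finset (Fin n → ℝ)) (c : (Fin n → ℝ) → ℝ) : Set (Fin n → ℝ) :=
  {μ | μ ∈ S ∧ c μ < 0}

/-- The hyperplane `H_{v,a}`. -/
def Hyp {n : ℕ} (v : Fin n → ℝ) (a : ℝ) : Set (Fin n → ℝ) :=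
  {μ | ∑ i, v i * μ i = a}

/-- The closed half-space `H⁺_{v,a}`. -/
def Hplus {n : ℕ} (v : Fin n → ℝ) (a : ℝ) : Set (Fin n → ℝ) :=
  {μ | a ≤ ∑ i, v i * μ i}

/-- The closed half-space `H⁻_{v,a}`. -/
def Hminus {n : ℕ} (v : Fin n → ℝ) (a : ℝ) : Set (Fin n → ℝ) :=
  {μ | ∑ i, v i * μ i ≤ a}

/-- The open half-space `H^{+,∘}_{v,a}`. -/
def HplusO {n : ℕ} (v : Fin n → ℝ) (a : ℝ) : Set (Fin n → ℝ) :=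
  {μ | a < ∑ i, v i * μ i}

/-- The open half-space `H^{-,∘}_{v,a}`. -/
def HminusO {n : ℕ} (v : Fin n → ℝ) (a : ℝ) : Set (Fin n → ℝ) :=
  {μ | ∑ i, v i * μ i < a}

/-- `U` is a connected component of `X` (a maximal nonempty preconnected subset of `X`). -/
def IsConnComp {n : ℕ} (X U : Set (Fin n → ℝ)) : Prop :=
  U.Nonempty ∧ U ⊆ X ∧ IsPreconnected U ∧
    ∀ W, U ⊆ W → W ⊆ X → IsPreconnected W → W = U

/-- The number (cardinality) of connected components of `X`. -/
noncomputable def compCard {n : ℕ} (X : Set (Fin n → ℝ)) : Cardinal :=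
  Cardinal.mk {U : Set (Fin n → ℝ) // IsConnComp X U}

/-- The face `N(f)_v` of the Newton polytope of a signomial with support `S`,
with outer normal vector `v`. -/
def faceOf {n : ℕ} (S : Finset (Fin n → ℝ)) (v : Fin n → ℝ) : Set (Fin n → ℝ) :=
  {ω ∈ convexHull ℝ (↑S : Set (Fin n → ℝ)) |
    ∀ μ ∈ convexHull ℝ (↑S : Set (Fin n → ℝ)), ∑ i, v i * μ i ≤ ∑ i, v i * ω i}

section Helpers

variable {n : ℕ}

theorem isConnComp_eq_of_inter {X U V : Set (Fin n → ℝ)} (hU : IsConnComp X U)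
    (hV : IsConnComp X V) (h : (U ∩ V).Nonempty) : U = V := by
  obtain ⟨z, hzU, hzV⟩ := h
  have hUV : IsPreconnected (U ∪ V) := hU.2.2.1.union z hzU hzV hV.2.2.1
  have h1 := hU.2.2.2 (U ∪ V) Set.subset_union_left (Set.union_subset hU.2.1 hV.2.1) hUV
  have h2 := hV.2.2.2 (U ∪ V) Set.subset_union_right (Set.union_subset hU.2.1 hV.2.1) hUV
  exact h1.symm.trans h2

theorem isConnComp_ccIn {X : Set (Fin n → ℝ)} {x : Fin n → ℝ} (hx : x ∈ X) :
    IsConnComp X (connectedComponentIn X x) := by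
  refine ⟨⟨x, mem_connectedComponentIn hx⟩, connectedComponentIn_subset X x,
    isPreconnected_connectedComponentIn, ?_⟩
  intro W hUW hWX hW
  exact subset_antisymm (hW.subset_connectedComponentIn (hUW (mem_connectedComponentIn hx)) hWX)
    hUW

theorem isConnComp_eq_ccIn {X U : Set (Fin n → ℝ)} (hU : IsConnComp X U) {x : Fin n → ℝ}
    (hx : x ∈ U) : U = connectedComponentIn X x := by
  refine subset_antisymm (hU.2.2.1.subset_connectedComponentIn hx hU.2.1) ?_
  have := hU.2.2.2 (connectedComponentIn X x)
    (hU.2.2.1.subset_connectedComponentIn hx hU.2.1) (connectedComponentIn_subset X x)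
    isPreconnected_connectedComponentIn
  exact this.le

theorem isConnComp_isOpen {X U : Set (Fin n → ℝ)} (hX : IsOpen X) (hU : IsConnComp X U) :
    IsOpen U := by
  obtain ⟨x, hx⟩ := hU.1
  rw [isConnComp_eq_ccIn hU hx]
  exact hX.connectedComponentIn

end Helpers

section Abstract

variable {n : ℕ}

theorem abstract_equiv {X A B : Set (Fin n → ℝ)}
    (hAo : IsOpen A) (hBo : IsOpen B)
    (hAX : ∀ U : Set (Fin n → ℝ), IsConnComp A U →
      (U ∩ X).Nonempty ∧ ∃ W, IsConnComp X W ∧ U ∩ X ⊆ W)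
    (hBX : ∀ V : Set (Fin n → ℝ), IsConnComp B V →
      (V ∩ X).Nonempty ∧ ∃ W, IsConnComp X W ∧ V ∩ X ⊆ W)
    (hcover : ∀ z ∈ X, z ∈ A ∨ z ∈ B)
    (hedge : ∀ z, z ∈ A → z ∈ B → z ∈ X) :
    Nonempty ({W : Set (Fin n → ℝ) // IsConnComp X W} ≃
      Quot (fun p q : {U : Set (Fin n → ℝ) // IsConnComp A U} ⊕
          {V : Set (Fin n → ℝ) // IsConnComp B V} =>
        ∃ U V', p = Sum.inl U ∧ q = Sum.inr V' ∧ (U.1 ∩ V'.1).Nonempty)) := by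
  set r : ({U : Set (Fin n → ℝ) // IsConnComp A U} ⊕
      {V : Set (Fin n → ℝ) // IsConnComp B V}) →
      ({U : Set (Fin n → ℝ) // IsConnComp A U} ⊕
      {V : Set (Fin n → ℝ) // IsConnComp B V}) → Prop :=
    fun p q => ∃ U V', p = Sum.inl U ∧ q = Sum.inr V' ∧ (U.1 ∩ V'.1).Nonempty with hr
  set wset : ({U : Set (Fin n → ℝ) // IsConnComp A U} ⊕
      {V : Set (Fin n → ℝ) // IsConnComp B V}) → Set (Fin n → ℝ) :=
    Sum.elim (fun U => U.1) (fun V => V.1) with hwset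
  have hwcomp : ∀ w, IsConnComp A (wset w) ∨ IsConnComp B (wset w) := by
    rintro (U | V)
    · exact Or.inl U.2
    · exact Or.inr V.2
  have hwopen : ∀ w, IsOpen (wset w) := by
    intro w
    rcases hwcomp w with h | h
    · exact isConnComp_isOpen hAo h
    · exact isConnComp_isOpen hBo h
  have hspec : ∀ w, ∃ W, IsConnComp X W ∧ (wset w ∩ X).Nonempty ∧ wset w ∩ X ⊆ W := by
    intro w
    rcases hwcomp w with h | h
    · obtain ⟨hne, W, hW, hsub⟩ := hAX _ h
      exact ⟨W, hW, hne, hsub⟩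
    · obtain ⟨hne, W, hW, hsub⟩ := hBX _ h
      exact ⟨W, hW, hne, hsub⟩
  choose Φ hΦ1 hΦ2 hΦ3 using hspec
  -- any two vertices sharing a point are related
  have step : ∀ w w' z, z ∈ wset w → z ∈ wset w' → Relation.EqvGen r w w' := by
    rintro (U | V) (U' | V') z hz hz'
    · have : U = U' := Subtype.ext (isConnComp_eq_of_inter U.2 U'.2 ⟨z, hz, hz'⟩)
      rw [this]; exact Relation.EqvGen.refl _
    · exact Relation.EqvGen.rel _ _ ⟨U, V', rfl, rfl, ⟨z, hz, hz'⟩⟩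
    · exact Relation.EqvGen.symm _ _ (Relation.EqvGen.rel _ _ ⟨U', V, rfl, rfl, ⟨z, hz', hz⟩⟩)
    · have : V = V' := Subtype.ext (isConnComp_eq_of_inter V.2 V'.2 ⟨z, hz, hz'⟩)
      rw [this]; exact Relation.EqvGen.refl _
  have hsound : ∀ w w', r w w' → Φ w = Φ w' := by
    rintro w w' ⟨U, V, rfl, rfl, z, hzU, hzV⟩
    have hzX : z ∈ X := hedge z (U.2.2.1 hzU) (V.2.2.1 hzV)
    exact isConnComp_eq_of_inter (hΦ1 _) (hΦ1 _)
      ⟨z, hΦ3 _ ⟨hzU, hzX⟩, hΦ3 _ ⟨hzV, hzX⟩⟩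
  let Θ : Quot r → {W : Set (Fin n → ℝ) // IsConnComp X W} :=
    Quot.lift (fun w => ⟨Φ w, hΦ1 w⟩) (fun w w' h => Subtype.ext (hsound w w' h))
  -- injectivity
  have hinj : ∀ w w', Φ w = Φ w' → Relation.EqvGen r w w' := by
    intro w w' hΦeq
    obtain ⟨x, hxw, hxX⟩ := hΦ2 w
    obtain ⟨y, hyw', hyX⟩ := hΦ2 w'
    have hxW : x ∈ Φ w := hΦ3 w ⟨hxw, hxX⟩
    have hyW : y ∈ Φ w := hΦeq ▸ hΦ3 w' ⟨hyw', hyX⟩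
    set good : (Fin n → ℝ) → Prop := fun z => ∃ w₀, Relation.EqvGen r w w₀ ∧ z ∈ wset w₀
      with hgood
    set O₁ : Set (Fin n → ℝ) := {z | good z} with hO₁def
    have hO₁ : IsOpen O₁ := by
      have : O₁ = ⋃ w₀ ∈ {w₀ | Relation.EqvGen r w w₀}, wset w₀ := by
        ext z; simp [hO₁def, hgood]
      rw [this]
      exact isOpen_biUnion fun w₀ _ => hwopen w₀
    set O₂ : Set (Fin n → ℝ) := ⋃₀ {s | IsOpen s ∧ ∀ z ∈ s, ¬ good z} with hO₂def
    have hO₂ : IsOpen O₂ := isOpen_sUnion fun s hs => hs.1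
    have hdisj : O₁ ∩ O₂ = ∅ := by
      ext z
      simp only [Set.mem_inter_iff, Set.mem_empty_iff_false, iff_false, not_and]
      intro hz1 hz2
      obtain ⟨s, hs, hzs⟩ := hz2
      exact hs.2 z hzs hz1
    have hXsub : ∀ z ∈ X, ∃ w₀, z ∈ wset w₀ := by
      intro z hz
      rcases hcover z hz with h | h
      · exact ⟨Sum.inl ⟨connectedComponentIn A z, isConnComp_ccIn h⟩,
          mem_connectedComponentIn h⟩
      · exact ⟨Sum.inr ⟨connectedComponentIn B z, isConnComp_ccIn h⟩,
          mem_connectedComponentIn h⟩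
    have hWcov : Φ w ⊆ O₁ ∪ O₂ := by
      intro z hzW
      by_cases hgz : good z
      · exact Or.inl hgz
      · have hzX : z ∈ X := (hΦ1 w).2.1 hzW
        obtain ⟨w₀, hzw₀⟩ := hXsub z hzX
        refine Or.inr ⟨wset w₀, ⟨hwopen w₀, ?_⟩, hzw₀⟩
        intro y' hy' hgy'
        obtain ⟨w₁, hrel, hy'w₁⟩ := hgy'
        exact hgz ⟨w₀, hrel.trans _ _ _ (step w₁ w₀ y' hy'w₁ hy'), hzw₀⟩
    have hWO₂ : (Φ w ∩ O₂) = ∅ := by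
      by_contra hne
      obtain ⟨t, htW, ht1, ht2⟩ := (hΦ1 w).2.2.1 O₁ O₂ hO₁ hO₂ hWcov
        ⟨x, hxW, ⟨w, Relation.EqvGen.refl w, hxw⟩⟩ (Set.nonempty_iff_ne_empty.mpr hne)
      exact Set.eq_empty_iff_forall_notMem.mp hdisj t (Set.mem_inter ht1 ht2)
    have hyO₁ : good y := by
      rcases hWcov hyW with h | h
      · exact h
      · exact absurd (Set.mem_inter hyW h) (by rw [hWO₂]; exact id)
    obtain ⟨w₁, hrel, hyw₁⟩ := hyO₁
    exact hrel.trans _ _ _ (step w₁ w' y hyw₁ hyw')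
  have hΘinj : Function.Injective Θ := by
    intro q q'
    induction q using Quot.ind with
    | _ w =>
    induction q' using Quot.ind with
    | _ w' =>
    intro h
    have h' : (⟨Φ w, hΦ1 w⟩ : {W : Set (Fin n → ℝ) // IsConnComp X W}) = ⟨Φ w', hΦ1 w'⟩ := h
    exact Quot.eqvGen_sound (hinj w w' (congrArg Subtype.val h'))
  have hΘsurj : Function.Surjective Θ := by
    rintro ⟨W, hWc⟩
    obtain ⟨x, hxW⟩ := hWc.1
    have hxX : x ∈ X := hWc.2.1 hxW
    rcases hcover x hxX with hxA | hxB
    · set w : {U : Set (Fin n → ℝ) // IsConnComp A U} ⊕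
          {V : Set (Fin n → ℝ) // IsConnComp B V} :=
        Sum.inl ⟨connectedComponentIn A x, isConnComp_ccIn hxA⟩ with hw
      refine ⟨Quot.mk r w, ?_⟩
      show (⟨Φ w, hΦ1 w⟩ : {W : Set (Fin n → ℝ) // IsConnComp X W}) = ⟨W, hWc⟩
      refine Subtype.ext (isConnComp_eq_of_inter (hΦ1 w) hWc ⟨x, hΦ3 w ⟨?_, hxX⟩, hxW⟩)
      exact mem_connectedComponentIn hxA
    · set w : {U : Set (Fin n → ℝ) // IsConnComp A U} ⊕
          {V : Set (Fin n → ℝ) // IsConnComp B V} :=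
        Sum.inr ⟨connectedComponentIn B x, isConnComp_ccIn hxB⟩ with hw
      refine ⟨Quot.mk r w, ?_⟩
      show (⟨Φ w, hΦ1 w⟩ : {W : Set (Fin n → ℝ) // IsConnComp X W}) = ⟨W, hWc⟩
      refine Subtype.ext (isConnComp_eq_of_inter (hΦ1 w) hWc ⟨x, hΦ3 w ⟨?_, hxX⟩, hxW⟩)
      exact mem_connectedComponentIn hxB
  exact ⟨(Equiv.ofBijective Θ ⟨hΘinj, hΘsurj⟩).symm⟩

end Abstract

section Faces

variable {n : ℕ}

theorem linMap_isLinear (w : Fin n → ℝ) :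
    IsLinearMap ℝ (fun ν : Fin n → ℝ => ∑ i, w i * ν i) := by
  constructor
  · intro ν ν'
    simp [Pi.add_apply, mul_add, Finset.sum_add_distrib]
  · intro a ν
    simp only [Pi.smul_apply, smul_eq_mul, Finset.mul_sum]
    exact Finset.sum_congr rfl fun i _ => by ring

theorem hull_le_sup' {S : Finset (Fin n → ℝ)} (hS : S.Nonempty) (w : Fin n → ℝ) :
    ∀ ν ∈ convexHull ℝ (↑S : Set (Fin n → ℝ)),
      ∑ i, w i * ν i ≤ S.sup' hS (fun ν => ∑ i, w i * ν i) := by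
  intro ν hν
  have : convexHull ℝ (↑S : Set (Fin n → ℝ)) ⊆
      {ν : Fin n → ℝ | ∑ i, w i * ν i ≤ S.sup' hS (fun ν => ∑ i, w i * ν i)} :=
    convexHull_min (fun μ hμ => Finset.le_sup' (fun ν : Fin n → ℝ => ∑ i, w i * ν i) hμ)
      (convex_halfSpace_le (linMap_isLinear w) _)
  exact this hν

theorem mem_faceOf_iff {S : Finset (Fin n → ℝ)} (hS : S.Nonempty) (w : Fin n → ℝ)
    {μ : Fin n → ℝ} (hμ : μ ∈ S) :
    μ ∈ faceOf S w ↔ ∑ i, w i * μ i = S.sup' hS (fun ν => ∑ i, w i * ν i) := by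
  constructor
  · rintro ⟨hhull, hmax⟩
    obtain ⟨ν₀, hν₀, hν₀eq⟩ := S.exists_mem_eq_sup' hS (fun ν => ∑ i, w i * ν i)
    refine le_antisymm (Finset.le_sup' (fun ν : Fin n → ℝ => ∑ i, w i * ν i) hμ) ?_
    rw [hν₀eq]
    exact hmax ν₀ (subset_convexHull ℝ _ hν₀)
  · intro heq
    refine ⟨subset_convexHull ℝ _ hμ, fun ν hν => ?_⟩
    rw [heq]
    exact hull_le_sup' hS w ν hν

theorem subset_faceOf_of_const {S : Finset (Fin n → ℝ)} (w : Fin n → ℝ)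
    (hconst : ∀ μ ∈ S, ∀ ν ∈ S, ∑ i, w i * μ i = ∑ i, w i * ν i) :
    (↑S : Set (Fin n → ℝ)) ⊆ faceOf S w := by
  intro μ hμ
  refine ⟨subset_convexHull ℝ _ hμ, fun ν hν => ?_⟩
  have : convexHull ℝ (↑S : Set (Fin n → ℝ)) ⊆
      {ν : Fin n → ℝ | ∑ i, w i * ν i ≤ ∑ i, w i * μ i} :=
    convexHull_min (fun ν' hν' => le_of_eq (hconst ν' hν' μ hμ))
      (convex_halfSpace_le (linMap_isLinear w) _)
  exact this hν

theorem sigOn_eq_sig {S : Finset (Fin n → ℝ)} {c : (Fin n → ℝ) → ℝ} {F : Set (Fin n → ℝ)}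
    (hSF : ∀ μ ∈ S, μ ∈ F) : sigOn S c F = sig S c := by
  funext x
  exact Finset.sum_congr rfl fun μ hμ => if_pos (hSF μ hμ)

theorem sup'_neg_eq {S : Finset (Fin n → ℝ)} (hS : S.Nonempty) (v : Fin n → ℝ) :
    S.sup' hS (fun ν => ∑ i, (-v) i * ν i) = -(S.inf' hS (fun ν => ∑ i, v i * ν i)) := by
  have hform : ∀ ν : Fin n → ℝ, ∑ i, (-v) i * ν i = -(∑ i, v i * ν i) := by
    intro ν
    rw [← Finset.sum_neg_distrib]
    exact Finset.sum_congr rfl fun i _ => by simp [neg_mul]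
  refine le_antisymm ?_ ?_
  · refine Finset.sup'_le hS _ fun ν hν => ?_
    rw [hform]
    exact neg_le_neg (Finset.inf'_le (fun ν : Fin n → ℝ => ∑ i, v i * ν i) hν)
  · obtain ⟨ν₀, hν₀, hν₀eq⟩ := S.exists_mem_eq_inf' hS (fun ν => ∑ i, v i * ν i)
    rw [hν₀eq, ← hform]
    exact Finset.le_sup' (fun ν : Fin n → ℝ => ∑ i, (-v) i * ν i) hν₀

theorem isOpen_negSetOn {S : Finset (Fin n → ℝ)} {c : (Fin n → ℝ) → ℝ} {F : Set (Fin n → ℝ)} :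
    IsOpen (negSetOn S c F) := by
  have horth : IsOpen {x : Fin n → ℝ | ∀ i, 0 < x i} := by
    have : {x : Fin n → ℝ | ∀ i, 0 < x i} = Set.pi Set.univ (fun _ => Set.Ioi (0:ℝ)) := by
      ext x; simp [Set.mem_pi]
    rw [this]
    exact isOpen_set_pi Set.finite_univ fun i _ => isOpen_Ioi
  have hcont : ContinuousOn (sigOn S c F) {x : Fin n → ℝ | ∀ i, 0 < x i} := by
    apply continuousOn_finset_sum
    intro μ _
    by_cases hμF : μ ∈ F
    · simp only [if_pos hμF]
      refine continuousOn_const.mul (continuousOn_finset_prod _ fun i _ => ?_)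
      exact ((continuous_apply i).continuousOn).rpow_const fun x hx => Or.inl (hx i).ne'
    · simp only [if_neg hμF]
      exact continuousOn_const
  have : negSetOn S c F = {x : Fin n → ℝ | ∀ i, 0 < x i} ∩ (sigOn S c F) ⁻¹' Set.Iio 0 := by
    ext x; rfl
  rw [this]
  exact hcont.isOpen_inter_preimage horth isOpen_Iio

end Faces

section Scaling

open Filter Real

theorem real_upward {a b G H t₀ t : ℝ} (hab : b ≤ a) (hG : G < 0) (ht₀ : 0 < t₀)
    (ht : t₀ ≤ t) (hneg : t₀ ^ a * G + t₀ ^ b * H < 0) : t ^ a * G + t ^ b * H < 0 := by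
  have htpos : 0 < t := lt_of_lt_of_le ht₀ ht
  set s : ℝ := t / t₀ with hs
  have hs1 : 1 ≤ s := (one_le_div ht₀).mpr ht
  have hspos : 0 < s := lt_of_lt_of_le one_pos hs1
  have hts : t = s * t₀ := by rw [hs]; exact (div_mul_cancel₀ t ht₀.ne').symm
  have hta : t ^ a = s ^ a * t₀ ^ a := by rw [hts, Real.mul_rpow hspos.le ht₀.le]
  have htb : t ^ b = s ^ b * t₀ ^ b := by rw [hts, Real.mul_rpow hspos.le ht₀.le]
  have hsba : s ^ b ≤ s ^ a := Real.rpow_le_rpow_of_exponent_le hs1 hab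
  have h1 : s ^ a * (t₀ ^ a * G) ≤ s ^ b * (t₀ ^ a * G) :=
    mul_le_mul_of_nonpos_right hsba
      (mul_nonpos_of_nonneg_of_nonpos (Real.rpow_pos_of_pos ht₀ a).le hG.le)
  have h2 : s ^ b * (t₀ ^ a * G + t₀ ^ b * H) < 0 :=
    mul_neg_of_pos_of_neg (Real.rpow_pos_of_pos hspos b) hneg
  calc t ^ a * G + t ^ b * H = s ^ a * (t₀ ^ a * G) + s ^ b * (t₀ ^ b * H) := by
        rw [hta, htb]; ring
    _ ≤ s ^ b * (t₀ ^ a * G) + s ^ b * (t₀ ^ b * H) := by linarith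
    _ = s ^ b * (t₀ ^ a * G + t₀ ^ b * H) := by ring
    _ < 0 := h2

theorem real_exists_t {a b : ℝ} (hab : b < a) (G H : ℝ) (hG : G < 0) :
    ∃ t : ℝ, 1 ≤ t ∧ t ^ a * G + t ^ b * H < 0 := by
  have h1 : Tendsto (fun t : ℝ => t ^ (a - b)) atTop atTop :=
    tendsto_rpow_atTop (by linarith)
  have h2 : ∀ᶠ t : ℝ in atTop, H / (-G) < t ^ (a - b) := h1.eventually_gt_atTop _
  obtain ⟨t, ht1, ht2⟩ := ((eventually_ge_atTop (1:ℝ)).and h2).exists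
  have htpos : (0:ℝ) < t := lt_of_lt_of_le one_pos ht1
  refine ⟨t, ht1, ?_⟩
  have hGpos : 0 < -G := neg_pos.mpr hG
  have h3 : H < t ^ (a - b) * (-G) := (div_lt_iff₀ hGpos).mp ht2
  have h4 : t ^ (a - b) * G + H < 0 := by nlinarith
  have h5 : t ^ a = t ^ b * t ^ (a - b) := by
    rw [← Real.rpow_add htpos]; ring_nf
  have h6 : t ^ a * G + t ^ b * H = t ^ b * (t ^ (a - b) * G + H) := by rw [h5]; ring
  rw [h6]
  exact mul_neg_of_pos_of_neg (Real.rpow_pos_of_pos htpos b) h4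

variable {n : ℕ}

theorem prod_rpow_scale (v μ x : Fin n → ℝ) {t : ℝ} (ht : 0 < t) (hx : ∀ i, 0 < x i) :
    ∏ i, (x i * t ^ v i) ^ μ i = (∏ i, x i ^ μ i) * t ^ (∑ i, v i * μ i) := by
  rw [Real.rpow_sum_of_pos ht, ← Finset.prod_mul_distrib]
  refine Finset.prod_congr rfl fun i _ => ?_
  rw [Real.mul_rpow (hx i).le (Real.rpow_nonneg ht.le _), ← Real.rpow_mul ht.le]

theorem sigOn_scale {S : Finset (Fin n → ℝ)} {c : (Fin n → ℝ) → ℝ} {F : Set (Fin n → ℝ)}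
    (v : Fin n → ℝ) {e : ℝ} (hF : ∀ μ ∈ S, μ ∈ F → ∑ i, v i * μ i = e)
    {t : ℝ} (ht : 0 < t) {x : Fin n → ℝ} (hx : ∀ i, 0 < x i) :
    sigOn S c F (fun i => x i * t ^ v i) = t ^ e * sigOn S c F x := by
  unfold sigOn
  rw [Finset.mul_sum]
  refine Finset.sum_congr rfl fun μ hμ => ?_
  by_cases hμF : μ ∈ F
  · rw [if_pos hμF, if_pos hμF, prod_rpow_scale v μ x ht hx, hF μ hμ hμF]
    ring
  · simp [hμF]

theorem contOn_scale_t (v x : Fin n → ℝ) :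
    ContinuousOn (fun t : ℝ => fun i => x i * t ^ v i) {t : ℝ | 0 < t} := by
  rw [continuousOn_pi]
  intro i
  exact continuousOn_const.mul
    (continuousOn_id.rpow_const fun t ht => Or.inl (ne_of_gt ht))

theorem cont_scale_x (v : Fin n → ℝ) (t : ℝ) :
    Continuous (fun x : Fin n → ℝ => fun i => x i * t ^ v i) :=
  continuous_pi fun i => (continuous_apply i).mul continuous_const

end Scaling

section Side

variable {n : ℕ}

theorem sum_neg_mul (v μ : Fin n → ℝ) : ∑ i, (-v) i * μ i = -∑ i, v i * μ i := by
  rw [← Finset.sum_neg_distrib]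
  exact Finset.sum_congr rfl fun i _ => by simp [neg_mul]

theorem faceChar_neg {S : Finset (Fin n → ℝ)} (hS : S.Nonempty) (v : Fin n → ℝ)
    {μ : Fin n → ℝ} (hμ : μ ∈ S) :
    μ ∈ faceOf S (-v) ↔ ∑ i, v i * μ i = S.inf' hS (fun ν => ∑ i, v i * ν i) := by
  rw [mem_faceOf_iff hS (-v) hμ, sup'_neg_eq hS v, sum_neg_mul, neg_inj]

theorem negSetOn_eq_of_const {S : Finset (Fin n → ℝ)} {c : (Fin n → ℝ) → ℝ} {v : Fin n → ℝ}
    (hconst : ∀ μ ∈ S, ∀ ν ∈ S, ∑ i, v i * μ i = ∑ i, v i * ν i) :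
    negSetOn S c (faceOf S v) = negSet S c := by
  unfold negSetOn negSet
  rw [sigOn_eq_sig (fun μ hμ => subset_faceOf_of_const v hconst (Finset.mem_coe.mpr hμ))]

theorem sig_decomp {S : Finset (Fin n → ℝ)} {c : (Fin n → ℝ) → ℝ} {v : Fin n → ℝ}
    (hcov : (↑S : Set (Fin n → ℝ)) ⊆ faceOf S v ∪ faceOf S (-v)) (hS : S.Nonempty)
    (hba : S.inf' hS (fun ν => ∑ i, v i * ν i) ≠ S.sup' hS (fun ν => ∑ i, v i * ν i)) :
    ∀ x, sig S c x = sigOn S c (faceOf S v) x + sigOn S c (faceOf S (-v)) x := by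
  intro x
  unfold sig sigOn
  rw [← Finset.sum_add_distrib]
  refine Finset.sum_congr rfl fun μ hμ => ?_
  rcases hcov (Finset.mem_coe.mpr hμ) with hp | hm
  · have h2 : μ ∉ faceOf S (-v) := by
      intro h2
      exact hba (((faceChar_neg hS v hμ).mp h2) ▸ ((mem_faceOf_iff hS v hμ).mp hp))
    rw [if_pos hp, if_neg h2, add_zero]
  · have h2 : μ ∉ faceOf S v := by
      intro h2
      exact hba (((faceChar_neg hS v hμ).mp hm) ▸ ((mem_faceOf_iff hS v hμ).mp h2))
    rw [if_neg h2, if_pos hm, zero_add]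

theorem isOpen_negSet {S : Finset (Fin n → ℝ)} {c : (Fin n → ℝ) → ℝ} :
    IsOpen (negSet S c) := by
  have : negSet S c = negSetOn S c Set.univ := by
    unfold negSet negSetOn
    rw [sigOn_eq_sig (fun μ _ => Set.mem_univ μ)]
  rw [this]
  exact isOpen_negSetOn

theorem cover_edge {n : ℕ} (S : Finset (Fin n → ℝ)) (c : (Fin n → ℝ) → ℝ) (v : Fin n → ℝ)
    (hcov : (↑S : Set (Fin n → ℝ)) ⊆ faceOf S v ∪ faceOf S (-v)) :
    (∀ z ∈ negSet S c, z ∈ negSetOn S c (faceOf S v) ∨ z ∈ negSetOn S c (faceOf S (-v)))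
    ∧ (∀ z, z ∈ negSetOn S c (faceOf S v) → z ∈ negSetOn S c (faceOf S (-v)) →
        z ∈ negSet S c) := by
  by_cases hconst : ∀ μ ∈ S, ∀ ν ∈ S, ∑ i, v i * μ i = ∑ i, v i * ν i
  · have h1 : negSetOn S c (faceOf S v) = negSet S c := negSetOn_eq_of_const hconst
    have hconst' : ∀ μ ∈ S, ∀ ν ∈ S, ∑ i, (-v) i * μ i = ∑ i, (-v) i * ν i := by
      intro μ hμ ν hν
      rw [sum_neg_mul, sum_neg_mul, neg_inj]
      exact hconst μ hμ ν hν
    have h2 : negSetOn S c (faceOf S (-v)) = negSet S c := negSetOn_eq_of_const hconst'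
    rw [h1, h2]
    exact ⟨fun z hz => Or.inl hz, fun z hz _ => hz⟩
  · push_neg at hconst
    obtain ⟨μ₀, hμ₀, ν₀, hν₀, hLne⟩ := hconst
    have hS : S.Nonempty := ⟨μ₀, hμ₀⟩
    have hba : S.inf' hS (fun ν => ∑ i, v i * ν i) ≠ S.sup' hS (fun ν => ∑ i, v i * ν i) := by
      intro h
      apply hLne
      have h1 := Finset.le_sup' (fun ν : Fin n → ℝ => ∑ i, v i * ν i) hμ₀
      have h2 := Finset.inf'_le (fun ν : Fin n → ℝ => ∑ i, v i * ν i) hμ₀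
      have h3 := Finset.le_sup' (fun ν : Fin n → ℝ => ∑ i, v i * ν i) hν₀
      have h4 := Finset.inf'_le (fun ν : Fin n → ℝ => ∑ i, v i * ν i) hν₀
      rw [h] at h2 h4
      linarith
    have hsplit := sig_decomp (c := c) hcov hS hba
    constructor
    · intro z hz
      have hz' : (∀ i, 0 < z i) ∧ sig S c z < 0 := hz
      by_contra hcon
      push_neg at hcon
      have hA : ¬((∀ i, 0 < z i) ∧ sigOn S c (faceOf S v) z < 0) := hcon.1
      have hB : ¬((∀ i, 0 < z i) ∧ sigOn S c (faceOf S (-v)) z < 0) := hcon.2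
      push_neg at hA hB
      have := hsplit z
      have h5 := hA hz'.1
      have h6 := hB hz'.1
      linarith [hz'.2]
    · intro z hzA hzB
      have h1 : (∀ i, 0 < z i) ∧ sigOn S c (faceOf S v) z < 0 := hzA
      have h2 : (∀ i, 0 < z i) ∧ sigOn S c (faceOf S (-v)) z < 0 := hzB
      refine ⟨h1.1, ?_⟩
      rw [hsplit z]
      linarith [h1.2, h2.2]

end Side

theorem side {n : ℕ} (S : Finset (Fin n → ℝ)) (c : (Fin n → ℝ) → ℝ) (v : Fin n → ℝ)
    (hcov : (↑S : Set (Fin n → ℝ)) ⊆ faceOf S v ∪ faceOf S (-v)) :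
    ∀ U : Set (Fin n → ℝ), IsConnComp (negSetOn S c (faceOf S v)) U →
      (U ∩ negSet S c).Nonempty ∧
        ∃ W, IsConnComp (negSet S c) W ∧ U ∩ negSet S c ⊆ W := by
  by_cases hconst : ∀ μ ∈ S, ∀ ν ∈ S, ∑ i, v i * μ i = ∑ i, v i * ν i
  · intro U hU
    rw [negSetOn_eq_of_const hconst] at hU
    rw [Set.inter_eq_self_of_subset_left hU.2.1]
    exact ⟨hU.1, U, hU, subset_rfl⟩
  · push_neg at hconst
    obtain ⟨μ₀, hμ₀, ν₀, hν₀, hLne⟩ := hconst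
    have hS : S.Nonempty := ⟨μ₀, hμ₀⟩
    set a := S.sup' hS (fun ν => ∑ i, v i * ν i) with ha
    set b := S.inf' hS (fun ν => ∑ i, v i * ν i) with hb
    have hba : b < a := by
      have h1 := Finset.le_sup' (fun ν : Fin n → ℝ => ∑ i, v i * ν i) hμ₀
      have h2 := Finset.inf'_le (fun ν : Fin n → ℝ => ∑ i, v i * ν i) hμ₀
      have h3 := Finset.le_sup' (fun ν : Fin n → ℝ => ∑ i, v i * ν i) hν₀
      have h4 := Finset.inf'_le (fun ν : Fin n → ℝ => ∑ i, v i * ν i) hν₀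
      rcases lt_or_ge b a with h | h
      · exact h
      · exfalso; exact hLne (by linarith)
    have hsplit := sig_decomp (c := c) hcov hS hba.ne
    have hga : ∀ μ ∈ S, μ ∈ faceOf S v → ∑ i, v i * μ i = a :=
      fun μ hμ hf => (mem_faceOf_iff hS v hμ).mp hf
    have hgb : ∀ μ ∈ S, μ ∈ faceOf S (-v) → ∑ i, v i * μ i = b :=
      fun μ hμ hf => (faceChar_neg hS v hμ).mp hf
    have memA : ∀ z : Fin n → ℝ, z ∈ negSetOn S c (faceOf S v) ↔
        (∀ i, 0 < z i) ∧ sigOn S c (faceOf S v) z < 0 := fun z => Iff.rfl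
    have memX : ∀ z : Fin n → ℝ, z ∈ negSet S c ↔
        (∀ i, 0 < z i) ∧ sig S c z < 0 := fun z => Iff.rfl
    have horthφ : ∀ {t : ℝ}, 0 < t → ∀ {x : Fin n → ℝ}, (∀ i, 0 < x i) →
        ∀ i, 0 < x i * t ^ v i := by
      intro t ht x hx i
      exact mul_pos (hx i) (Real.rpow_pos_of_pos ht _)
    have hgscale : ∀ {t : ℝ}, 0 < t → ∀ {x : Fin n → ℝ}, (∀ i, 0 < x i) →
        sigOn S c (faceOf S v) (fun i => x i * t ^ v i) =
          t ^ a * sigOn S c (faceOf S v) x := by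
      intro t ht x hx
      exact sigOn_scale v hga ht hx
    have hhscale : ∀ {t : ℝ}, 0 < t → ∀ {x : Fin n → ℝ}, (∀ i, 0 < x i) →
        sigOn S c (faceOf S (-v)) (fun i => x i * t ^ v i) =
          t ^ b * sigOn S c (faceOf S (-v)) x := by
      intro t ht x hx
      exact sigOn_scale v hgb ht hx
    have hsig : ∀ {t : ℝ}, 0 < t → ∀ {x : Fin n → ℝ}, (∀ i, 0 < x i) →
        sig S c (fun i => x i * t ^ v i) =
          t ^ a * sigOn S c (faceOf S v) x + t ^ b * sigOn S c (faceOf S (-v)) x := by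
      intro t ht x hx
      rw [hsplit, hgscale ht hx, hhscale ht hx]
    have hφ1 : ∀ z : Fin n → ℝ, (fun i => z i * (1:ℝ) ^ v i) = z :=
      fun z => funext fun i => by rw [Real.one_rpow, mul_one]
    -- flowing up stays in the same component of negSet
    have hseg : ∀ z : Fin n → ℝ, (∀ i, 0 < z i) → sigOn S c (faceOf S v) z < 0 →
        ∀ t₀ t' : ℝ, 0 < t₀ → t₀ ≤ t' → (fun i => z i * t₀ ^ v i) ∈ negSet S c →
        (fun i => z i * t' ^ v i) ∈
          connectedComponentIn (negSet S c) (fun i => z i * t₀ ^ v i) := by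
      intro z hz hgz t₀ t' ht₀ hle hmem
      set K := (fun s : ℝ => fun i => z i * s ^ v i) '' Set.Icc t₀ t' with hK
      have hKX : K ⊆ negSet S c := by
        rintro _ ⟨s, hs, rfl⟩
        have hspos : 0 < s := lt_of_lt_of_le ht₀ hs.1
        refine (memX _).mpr ⟨horthφ hspos hz, ?_⟩
        rw [hsig hspos hz]
        have hneg₀ : t₀ ^ a * sigOn S c (faceOf S v) z +
            t₀ ^ b * sigOn S c (faceOf S (-v)) z < 0 := by
          have h := ((memX _).mp hmem).2
          rwa [hsig ht₀ hz] at h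
        exact real_upward hba.le hgz ht₀ hs.1 hneg₀
      have hKpre : IsPreconnected K :=
        isPreconnected_Icc.image _
          ((contOn_scale_t v z).mono fun s hs => lt_of_lt_of_le ht₀ hs.1)
      have h0K : (fun i => z i * t₀ ^ v i) ∈ K := ⟨t₀, ⟨le_refl _, hle⟩, rfl⟩
      have h1K : (fun i => z i * t' ^ v i) ∈ K := ⟨t', ⟨hle, le_refl _⟩, rfl⟩
      exact hKpre.subset_connectedComponentIn h0K hKX h1K
    intro U hU
    obtain ⟨x, hxU⟩ := hU.1
    have hxA := hU.2.1 hxU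
    have hx1 : ∀ i, 0 < x i := ((memA x).mp hxA).1
    have hgx : sigOn S c (faceOf S v) x < 0 := ((memA x).mp hxA).2
    obtain ⟨t, ht1, htneg⟩ := real_exists_t hba (sigOn S c (faceOf S v) x)
      (sigOn S c (faceOf S (-v)) x) hgx
    have htpos : 0 < t := lt_of_lt_of_le one_pos ht1
    set y : Fin n → ℝ := fun i => x i * t ^ v i with hy
    have hyX : y ∈ negSet S c :=
      (memX y).mpr ⟨horthφ htpos hx1, by rw [hy, hsig htpos hx1]; exact htneg⟩
    have hyU : y ∈ U := by
      set K := (fun s : ℝ => fun i => x i * s ^ v i) '' Set.Icc 1 t with hK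
      have hKA : K ⊆ negSetOn S c (faceOf S v) := by
        rintro _ ⟨s, hs, rfl⟩
        have hspos : 0 < s := lt_of_lt_of_le one_pos hs.1
        refine (memA _).mpr ⟨horthφ hspos hx1, ?_⟩
        rw [hgscale hspos hx1]
        exact mul_neg_of_pos_of_neg (Real.rpow_pos_of_pos hspos a) hgx
      have hKpre : IsPreconnected K :=
        isPreconnected_Icc.image _
          ((contOn_scale_t v x).mono fun s hs => lt_of_lt_of_le one_pos hs.1)
      have hxK : x ∈ K := ⟨1, ⟨le_refl _, ht1⟩, hφ1 x⟩
      have hyK : y ∈ K := ⟨t, ⟨ht1, le_refl _⟩, rfl⟩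
      rw [isConnComp_eq_ccIn hU hxU]
      exact hKpre.subset_connectedComponentIn hxK hKA hyK
    refine ⟨⟨y, hyU, hyX⟩, connectedComponentIn (negSet S c) y, isConnComp_ccIn hyX, ?_⟩
    set W := connectedComponentIn (negSet S c) y with hW
    have hWopen : IsOpen W := isOpen_negSet.connectedComponentIn
    set good : (Fin n → ℝ) → Prop :=
      fun z => ∃ t' : ℝ, 1 ≤ t' ∧ (fun i => z i * t' ^ v i) ∈ W with hgood
    set O₁ : Set (Fin n → ℝ) := {z | good z} with hO₁def
    have hO₁ : IsOpen O₁ := by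
      have : O₁ = ⋃ t' ∈ Set.Ici (1:ℝ), (fun z : Fin n → ℝ => fun i => z i * t' ^ v i) ⁻¹' W := by
        ext z
        simp only [hO₁def, hgood, Set.mem_setOf_eq, Set.mem_iUnion, Set.mem_Ici,
          Set.mem_preimage, exists_prop]
      rw [this]
      exact isOpen_biUnion fun t' _ => hWopen.preimage (cont_scale_x v t')
    set O₂ : Set (Fin n → ℝ) := ⋃₀ {s | IsOpen s ∧ ∀ z ∈ s, ¬ good z} with hO₂def
    have hO₂ : IsOpen O₂ := isOpen_sUnion fun s hs => hs.1
    have hdisj : O₁ ∩ O₂ = ∅ := by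
      ext z
      simp only [Set.mem_inter_iff, Set.mem_empty_iff_false, iff_false, not_and]
      intro hz1 hz2
      obtain ⟨s, hs, hzs⟩ := hz2
      exact hs.2 z hzs hz1
    have hUcov : U ⊆ O₁ ∪ O₂ := by
      intro z hzU
      by_cases hgz : good z
      · exact Or.inl hgz
      · have hzA := hU.2.1 hzU
        have hz1 : ∀ i, 0 < z i := ((memA z).mp hzA).1
        have hzg : sigOn S c (faceOf S v) z < 0 := ((memA z).mp hzA).2
        obtain ⟨tz, htz1, htzneg⟩ := real_exists_t hba (sigOn S c (faceOf S v) z)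
          (sigOn S c (faceOf S (-v)) z) hzg
        have htzpos : 0 < tz := lt_of_lt_of_le one_pos htz1
        have hyzX : (fun i => z i * tz ^ v i) ∈ negSet S c :=
          (memX _).mpr ⟨horthφ htzpos hz1, by rw [hsig htzpos hz1]; exact htzneg⟩
        set Wz := connectedComponentIn (negSet S c) (fun i => z i * tz ^ v i) with hWz
        have hWzopen : IsOpen Wz := isOpen_negSet.connectedComponentIn
        refine Or.inr ⟨negSetOn S c (faceOf S v) ∩
          (fun z' : Fin n → ℝ => fun i => z' i * tz ^ v i) ⁻¹' Wz,
          ⟨isOpen_negSetOn.inter (hWzopen.preimage (cont_scale_x v tz)), ?_⟩,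
          hzA, mem_connectedComponentIn hyzX⟩
        rintro z' ⟨hz'A, hz'pre⟩ ⟨t', ht'1, ht'W⟩
        have hz'1 : ∀ i, 0 < z' i := ((memA z').mp hz'A).1
        have hz'g : sigOn S c (faceOf S v) z' < 0 := ((memA z').mp hz'A).2
        have ht'pos : 0 < t' := lt_of_lt_of_le one_pos ht'1
        set m := max t' tz with hm
        have h1 : (fun i => z' i * m ^ v i) ∈
            connectedComponentIn (negSet S c) (fun i => z' i * t' ^ v i) :=
          hseg z' hz'1 hz'g t' m ht'pos (le_max_left _ _)
            (connectedComponentIn_subset (negSet S c) y ht'W)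
        have h2 : (fun i => z' i * m ^ v i) ∈
            connectedComponentIn (negSet S c) (fun i => z' i * tz ^ v i) :=
          hseg z' hz'1 hz'g tz m htzpos (le_max_right _ _)
            (connectedComponentIn_subset (negSet S c) _ hz'pre)
        have hWeq : connectedComponentIn (negSet S c) (fun i => z' i * t' ^ v i) = W :=
          (connectedComponentIn_eq ht'W).symm
        have hWzeq : connectedComponentIn (negSet S c) (fun i => z' i * tz ^ v i) = Wz :=
          (connectedComponentIn_eq hz'pre).symm
        rw [hWeq] at h1
        rw [hWzeq] at h2
        have hWWz : W = Wz := by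
          have e1 : W = connectedComponentIn (negSet S c) (fun i => z' i * m ^ v i) :=
            connectedComponentIn_eq h1
          have e2 : Wz = connectedComponentIn (negSet S c) (fun i => z' i * m ^ v i) :=
            connectedComponentIn_eq h2
          rw [e1, e2]
        exact hgz ⟨tz, htz1, by rw [hWWz]; exact mem_connectedComponentIn hyzX⟩
    have hyO₁ : good y := ⟨1, le_refl _, by rw [hφ1 y]; exact mem_connectedComponentIn hyX⟩
    have hUO₂ : U ∩ O₂ = ∅ := by
      by_contra hne
      obtain ⟨p, hpU, hp1, hp2⟩ := hU.2.2.1 O₁ O₂ hO₁ hO₂ hUcov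
        ⟨y, hyU, hyO₁⟩ (Set.nonempty_iff_ne_empty.mpr hne)
      exact Set.eq_empty_iff_forall_notMem.mp hdisj p (Set.mem_inter hp1 hp2)
    rintro z ⟨hzU, hzX⟩
    have hzO₁ : good z := by
      rcases hUcov hzU with h | h
      · exact h
      · exact absurd (Set.mem_inter hzU h)
          (by rw [hUO₂]; exact Set.notMem_empty z)
    obtain ⟨t', ht'1, ht'W⟩ := hzO₁
    have hz1 : ∀ i, 0 < z i := ((memA z).mp (hU.2.1 hzU)).1
    have hzg : sigOn S c (faceOf S v) z < 0 := ((memA z).mp (hU.2.1 hzU)).2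
    have h1 : (fun i => z i * t' ^ v i) ∈
        connectedComponentIn (negSet S c) (fun i => z i * (1:ℝ) ^ v i) :=
      hseg z hz1 hzg 1 t' one_pos ht'1 (by rw [hφ1 z]; exact hzX)
    rw [hφ1 z] at h1
    have : connectedComponentIn (negSet S c) z = W := by
      have e1 : connectedComponentIn (negSet S c) z =
          connectedComponentIn (negSet S c) (fun i => z i * t' ^ v i) :=
        connectedComponentIn_eq h1
      have e2 : W = connectedComponentIn (negSet S c) (fun i => z i * t' ^ v i) :=
        connectedComponentIn_eq ht'W
      rw [e1, e2]
    rw [← this]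
    exact mem_connectedComponentIn hzX

/-- Proposition 3.3: if the support lies on two parallel faces `N(f)_v` and `N(f)_{-v}`,
then the number of negative connected components of `f` equals the number `D` of connected
components of the bipartite intersection graph on the components of `f|_{N(f)_v}` and
`f|_{N(f)_{-v}}`, and `D` is at most the total number of those components. The components of
the graph are modelled as the quotient of the vertex set by (the equivalence relation
generated by) the edge relation. -/
theorem stmt_13 (n : ℕ) (S : Finset (Fin n → ℝ)) (c : (Fin n → ℝ) → ℝ)
    (hc : ∀ μ ∈ S, c μ ≠ 0)
    (v : Fin n → ℝ)
    (hcov : (↑S : Set (Fin n → ℝ)) ⊆ faceOf S v ∪ faceOf S (-v))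
    (D : Cardinal)
    (hD : D = Cardinal.mk (Quot (fun p q :
        {U : Set (Fin n → ℝ) // IsConnComp (negSetOn S c (faceOf S v)) U} ⊕
        {V : Set (Fin n → ℝ) // IsConnComp (negSetOn S c (faceOf S (-v))) V} =>
      ∃ U V', p = Sum.inl U ∧ q = Sum.inr V' ∧ (U.1 ∩ V'.1).Nonempty))) :
    compCard (negSet S c) = D ∧
      D ≤ compCard (negSetOn S c (faceOf S v)) + compCard (negSetOn S c (faceOf S (-v))) := by
  have hcov' : (↑S : Set (Fin n → ℝ)) ⊆ faceOf S (-v) ∪ faceOf S (-(-v)) := by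
    rw [neg_neg]
    intro μ hμ
    rcases hcov hμ with h | h
    · exact Or.inr h
    · exact Or.inl h
  have hAX := side S c v hcov
  have hBX := side S c (-v) hcov'
  have hce := cover_edge S c v hcov
  obtain ⟨e⟩ := abstract_equiv (X := negSet S c) isOpen_negSetOn isOpen_negSetOn
    hAX hBX hce.1 hce.2
  constructor
  · rw [hD]
    exact Cardinal.mk_congr e
  · rw [hD]
    refine le_trans Cardinal.mk_quot_le ?_
    rw [Cardinal.mk_sum, Cardinal.lift_id, Cardinal.lift_id]
    rfl
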